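/- Let Γ be a finite directed acyclic graph, R a commutative ring, and w a function assigning to each edge of Γ an element of R. For a directed path P, let w(P) be the product of the weights of its edges, and for vertices u, v let e(u,v) = Σ_P w(P), the (finite) sum over all directed paths P from u to v. Fix vertices a_1,…,a_n and b_1,…,b_n of Γ. Then det(e(a_i,b_j))_{1≤i,j≤n} = Σ_{σ ∈ S_n} sgn(σ) · Σ_{(P_1,…,P_n)} ∏_{i=1}^n w(P_i), where the inner sum ranges over all n-tuples (P_1,…,P_n) of pairwise vertex-disjoint directed paths such that P_i goes from a_i to b_{σ(i)}. -/

import Mathlib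

/-- A directed path from `u` to `v` in the graph with edge relation `E`, recorded as the
list of vertices it visits (so a path with no edges is `[u]` with `u = v`). -/
def IsDirPath {V : Type*} (E : V → V → Prop) (u v : V) (l : List V) : Prop :=
  l.Chain' E ∧ l.head? = some u ∧ l.getLast? = some v

/-- The weight of a path: the product of the weights of its (consecutive) edges. -/
def pathWeight {V R : Type*} [CommRing R] (w : V → V → R) (l : List V) : R :=
  ((l.zip l.tail).map fun q => w q.1 q.2).prod

namespace LGVaux

variable {V : Type*}

/-! ### Acyclicity gives nodup -/

theorem chain'_nodup {E : V → V → Prop}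
    (hacyc : ∀ l : List V, l.Chain' E → 2 ≤ l.length → l.head? ≠ l.getLast?) :
    ∀ l : List V, l.Chain' E → l.Nodup := by
  intro l
  induction l with
  | nil => simp
  | cons x xs ih =>
    intro hc
    rw [List.nodup_cons]
    refine ⟨fun hx => ?_, ih hc.tail⟩
    obtain ⟨s, t, rfl⟩ := List.append_of_mem hx
    have hpre : (x :: (s ++ [x])) <+: (x :: (s ++ x :: t)) := ⟨t, by simp⟩
    have hchain : (x :: (s ++ [x])).Chain' E := hc.prefix hpre
    refine hacyc _ hchain (by simp) ?_
    have : (x :: (s ++ [x])) = (x :: s) ++ [x] := by simp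
    rw [this, List.getLast?_concat]
    simp

/-! ### pathWeight lemmas -/

variable {R : Type*} [CommRing R] {w : V → V → R}

theorem pathWeight_cons_cons (x y : V) (t : List V) :
    pathWeight w (x :: y :: t) = w x y * pathWeight w (y :: t) := by
  simp [pathWeight]

theorem pathWeight_append_cons (v : V) :
    ∀ (A B : List V), pathWeight w (A ++ v :: B) = pathWeight w (A ++ [v]) * pathWeight w (v :: B)
  | [], B => by simp [pathWeight]
  | [a], B => by
    simp only [List.cons_append, List.nil_append, pathWeight_cons_cons]
    simp [pathWeight]
  | a :: c :: A', B => by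
    have h1 := pathWeight_append_cons v (c :: A') B
    simp only [List.cons_append] at h1 ⊢
    rw [pathWeight_cons_cons, pathWeight_cons_cons, h1]
    ring

theorem pathWeight_take_drop (l : List V) (k : ℕ) (hk : k < l.length) :
    pathWeight w l = pathWeight w (l.take (k+1)) * pathWeight w (l.drop k) := by
  have h1 : l.take (k+1) = l.take k ++ [l.get ⟨k, hk⟩] := by
    rw [List.take_succ]; simp [List.getElem?_eq_getElem hk]
  have h2 : l.drop k = l.get ⟨k, hk⟩ :: l.drop (k+1) := List.drop_eq_getElem_cons hk
  conv_lhs => rw [← List.take_append_drop k l, h2]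
  rw [pathWeight_append_cons, h1, h2]

/-! ### glue -/

def glue (l1 l2 : List V) (k m : ℕ) : List V := l1.take (k+1) ++ l2.drop (m+1)

section glue

variable {l1 l2 : List V} {k m : ℕ}

theorem glue_length (hk : k < l1.length) : k < (glue l1 l2 k m).length := by
  simp [glue, List.length_take]; omega

theorem glue_get' (hk : k < l1.length) {k' : ℕ} (hk' : k' ≤ k) (h : k' < (glue l1 l2 k m).length) :
    (glue l1 l2 k m).get ⟨k', h⟩ = l1.get ⟨k', lt_of_le_of_lt hk' hk⟩ := by
  have h1 : k' < (l1.take (k+1)).length := by simp [List.length_take]; omega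
  simp only [glue, List.get_eq_getElem, List.getElem_append_left h1]
  simp [List.getElem_take]

theorem glue_get (hk : k < l1.length) :
    (glue l1 l2 k m).get ⟨k, glue_length hk⟩ = l1.get ⟨k, hk⟩ :=
  glue_get' hk le_rfl _

theorem mem_glue {x : V} (h : x ∈ glue l1 l2 k m) : x ∈ l1 ∨ x ∈ l2 := by
  rcases List.mem_append.mp h with h | h
  · exact Or.inl (List.mem_of_mem_take h)
  · exact Or.inr (List.mem_of_mem_drop h)

theorem glue_take (hk : k < l1.length) : (glue l1 l2 k m).take (k+1) = l1.take (k+1) := by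
  rw [glue, List.take_append_of_le_length (by simp [List.length_take]; omega), List.take_take]
  simp

theorem glue_drop (hk : k < l1.length) : (glue l1 l2 k m).drop (k+1) = l2.drop (m+1) := by
  have : (l1.take (k+1)).length = k+1 := by simp [List.length_take]; omega
  rw [glue]; exact List.drop_left' this

theorem glue_head? (hk : k < l1.length) : (glue l1 l2 k m).head? = l1.head? := by
  cases l1 with
  | nil => simp at hk
  | cons x xs => simp [glue, List.take_succ_cons]

theorem glue_getLast? (hk : k < l1.length) (hm : m < l2.length)
    (hv : l1.get ⟨k, hk⟩ = l2.get ⟨m, hm⟩) :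
    (glue l1 l2 k m).getLast? = l2.getLast? := by
  rcases eq_or_ne (l2.drop (m+1)) [] with h | h
  · have hlen : l2.length ≤ m + 1 := by
      have h2 := congrArg List.length h
      simp at h2; omega
    have hm1 : m = l2.length - 1 := by omega
    have hlast : l2.getLast? = some (l2.get ⟨m, hm⟩) := by
      rw [List.getLast?_eq_getElem?]
      simp [List.getElem?_eq_getElem (show l2.length - 1 < l2.length by omega), ← hm1]
    have h1 : l1.take (k+1) = l1.take k ++ [l1.get ⟨k, hk⟩] := by
      rw [List.take_succ]; simp [List.getElem?_eq_getElem hk]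
    rw [glue, h, List.append_nil, h1, List.getLast?_concat, hlast, hv]
  · rw [glue, List.getLast?_append_of_ne_nil _ h]
    conv_rhs => rw [← List.take_append_drop (m+1) l2]
    rw [List.getLast?_append_of_ne_nil _ h]

theorem glue_chain' {E : V → V → Prop} (hk : k < l1.length) (hm : m < l2.length)
    (h1 : l1.Chain' E) (h2 : l2.Chain' E) (hv : l1.get ⟨k, hk⟩ = l2.get ⟨m, hm⟩) :
    (glue l1 l2 k m).Chain' E := by
  rw [glue]; show List.IsChain E _; rw [List.isChain_append]
  refine ⟨(h1 : List.IsChain E l1).take _, (h2 : List.IsChain E l2).drop _, fun x hx y hy => ?_⟩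
  have htk : l1.take (k+1) = l1.take k ++ [l1.get ⟨k, hk⟩] := by
    rw [List.take_succ]; simp [List.getElem?_eq_getElem hk]
  rw [htk, List.getLast?_concat] at hx
  rw [List.head?_drop] at hy
  have hx' : x = l1.get ⟨k, hk⟩ := by simpa using hx.symm
  rcases lt_or_ge (m+1) l2.length with hm1 | hm1
  · have hy' : y = l2.get ⟨m+1, hm1⟩ := by
      rw [List.getElem?_eq_getElem hm1] at hy
      simpa using hy.symm
    subst hx' hy'
    rw [hv]
    exact List.isChain_iff_getElem.mp h2 m (by omega)
  · rw [List.getElem?_eq_none hm1] at hy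
    simp at hy

theorem glue_pathWeight (hk : k < l1.length) (hm : m < l2.length)
    (hv : l1.get ⟨k, hk⟩ = l2.get ⟨m, hm⟩) :
    pathWeight w (glue l1 l2 k m) = pathWeight w (l1.take (k+1)) * pathWeight w (l2.drop m) := by
  have h1 : l1.take (k+1) = l1.take k ++ [l1.get ⟨k, hk⟩] := by
    rw [List.take_succ]; simp [List.getElem?_eq_getElem hk]
  have h2 : l2.drop m = l2.get ⟨m, hm⟩ :: l2.drop (m+1) := List.drop_eq_getElem_cons hm
  rw [glue, h1, List.append_assoc, List.singleton_append, pathWeight_append_cons, ← h1, hv, ← h2]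

theorem glue_weight_mul (hk : k < l1.length) (hm : m < l2.length)
    (hv : l1.get ⟨k, hk⟩ = l2.get ⟨m, hm⟩) :
    pathWeight w (glue l1 l2 k m) * pathWeight w (glue l2 l1 m k)
      = pathWeight w l1 * pathWeight w l2 := by
  have e1 := pathWeight_take_drop (w := w) l1 k hk
  have e2 := pathWeight_take_drop (w := w) l2 m hm
  rw [glue_pathWeight hk hm hv, glue_pathWeight hm hk hv.symm, e1, e2]
  ring

theorem glue_glue (hk : k < l1.length) (hm : m < l2.length) :
    glue (glue l1 l2 k m) (glue l2 l1 m k) k m = l1 := by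
  rw [glue, glue_take hk, glue_drop hm, List.take_append_drop]

end glue


variable {V : Type*}

def meets {n : ℕ} (P : Fin n → List V) (i : Fin n) : Prop :=
  ∃ j, j ≠ i ∧ ∃ x, x ∈ P i ∧ x ∈ P j

structure SwitchData {n : ℕ} (P : Fin n → List V) where
  i : Fin n
  j : Fin n
  k : ℕ
  m : ℕ
  hk : k < (P i).length
  hm : m < (P j).length
  hji : j ≠ i
  hv : (P j).get ⟨m, hm⟩ = (P i).get ⟨k, hk⟩
  min_i : ∀ i' < i, ¬ meets P i'
  min_k : ∀ k' < k, ∀ (hk' : k' < (P i).length), ∀ j' ≠ i, (P i).get ⟨k', hk'⟩ ∉ P j'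
  min_j : ∀ j' ≠ i, (P i).get ⟨k, hk⟩ ∈ P j' → j ≤ j'
  min_m : ∀ m' < m, ∀ (hm' : m' < (P j).length), (P j).get ⟨m', hm'⟩ ≠ (P i).get ⟨k, hk⟩

variable {n : ℕ} {P : Fin n → List V}

theorem exists_switchData (h : ∃ i, meets P i) : Nonempty (SwitchData P) := by
  classical
  set s := Finset.univ.filter (fun i => meets P i) with hs_def
  have hs : s.Nonempty := by
    obtain ⟨i, hi⟩ := h
    exact ⟨i, by simp [hs_def, hi]⟩
  set i := s.min' hs with hi_def
  have hi : meets P i := by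
    have := s.min'_mem hs
    simpa [hs_def] using this
  have hmin_i : ∀ i' < i, ¬ meets P i' := by
    intro i' hi' hm
    exact absurd (s.min'_le i' (by simp [hs_def, hm])) (not_le.mpr hi')
  have hek : ∃ k, ∃ (hk : k < (P i).length), ∃ j, j ≠ i ∧ (P i).get ⟨k, hk⟩ ∈ P j := by
    obtain ⟨j, hj, x, hx1, hx2⟩ := hi
    obtain ⟨⟨k, hk⟩, rfl⟩ := List.mem_iff_get.mp hx1
    exact ⟨k, hk, j, hj, hx2⟩
  set k := Nat.find hek with hk_def
  obtain ⟨hk, j1, hj1, hj1mem⟩ := Nat.find_spec hek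
  have hmin_k : ∀ k' < k, ∀ (hk' : k' < (P i).length), ∀ j' ≠ i, (P i).get ⟨k', hk'⟩ ∉ P j' := by
    intro k' hk' hkl j' hj' hmem
    exact Nat.find_min hek hk' ⟨hkl, j', hj', hmem⟩
  set t := Finset.univ.filter (fun j => j ≠ i ∧ (P i).get ⟨k, hk⟩ ∈ P j) with ht_def
  have ht : t.Nonempty := ⟨j1, by simp only [ht_def, Finset.mem_filter, Finset.mem_univ, true_and]; exact ⟨hj1, hj1mem⟩⟩
  set j := t.min' ht with hj_def
  have hjprop : j ≠ i ∧ (P i).get ⟨k, hk⟩ ∈ P j := by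
    have := t.min'_mem ht
    exact (Finset.mem_filter.mp this).2
  have hmin_j : ∀ j' ≠ i, (P i).get ⟨k, hk⟩ ∈ P j' → j ≤ j' :=
    fun j' h1 h2 => t.min'_le j' (by simp only [ht_def, Finset.mem_filter, Finset.mem_univ, true_and]; exact ⟨h1, h2⟩)
  have hem : ∃ m, ∃ (hm : m < (P j).length), (P j).get ⟨m, hm⟩ = (P i).get ⟨k, hk⟩ := by
    obtain ⟨⟨m, hm⟩, hmv⟩ := List.mem_iff_get.mp hjprop.2
    exact ⟨m, hm, hmv⟩
  obtain ⟨hm, hmv⟩ := Nat.find_spec hem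
  exact ⟨⟨i, j, Nat.find hek, Nat.find hem, hk, hm, hjprop.1, hmv, hmin_i, hmin_k, hmin_j,
    fun m' h1 hm' h2 => Nat.find_min hem h1 ⟨hm', h2⟩⟩⟩

theorem switchData_unique (d e : SwitchData P) :
    d.i = e.i ∧ d.j = e.j ∧ d.k = e.k ∧ d.m = e.m := by
  obtain ⟨i1, j1, k1, m1, hk1, hm1, hji1, hv1, mi1, mk1, mj1, mm1⟩ := d
  obtain ⟨i2, j2, k2, m2, hk2, hm2, hji2, hv2, mi2, mk2, mj2, mm2⟩ := e
  simp only
  have hmem1 : (P i1).get ⟨k1, hk1⟩ ∈ P j1 := by rw [← hv1]; exact List.get_mem _ _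
  have hmem2 : (P i2).get ⟨k2, hk2⟩ ∈ P j2 := by rw [← hv2]; exact List.get_mem _ _
  have hmeets1 : meets P i1 := ⟨j1, hji1, _, List.get_mem _ _, hmem1⟩
  have hmeets2 : meets P i2 := ⟨j2, hji2, _, List.get_mem _ _, hmem2⟩
  have hii : i1 = i2 := by
    rcases lt_trichotomy i1 i2 with h | h | h
    · exact absurd hmeets1 (mi2 _ h)
    · exact h
    · exact absurd hmeets2 (mi1 _ h)
  subst hii
  have hkk : k1 = k2 := by
    rcases lt_trichotomy k1 k2 with h | h | h
    · exact absurd hmem1 (mk2 _ h hk1 _ hji1)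
    · exact h
    · exact absurd hmem2 (mk1 _ h hk2 _ hji2)
  subst hkk
  have hveq : (P i1).get ⟨k1, hk1⟩ = (P i1).get ⟨k1, hk2⟩ := rfl
  have hjj : j1 = j2 := by
    refine le_antisymm (mj1 j2 hji2 ?_) (mj2 j1 hji1 ?_)
    · exact hveq ▸ hmem2
    · exact hveq.symm ▸ hmem1
  subst hjj
  refine ⟨rfl, rfl, rfl, ?_⟩
  rcases lt_trichotomy m1 m2 with h | h | h
  · exact absurd (hveq.symm ▸ hv1) (mm2 _ h hm1)
  · exact h
  · exact absurd (hveq ▸ hv2) (mm1 _ h hm2)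

def SwitchData.v (d : SwitchData P) : V := (P d.i).get ⟨d.k, d.hk⟩

theorem SwitchData.v_mem_i (d : SwitchData P) : d.v ∈ P d.i := List.get_mem _ _
theorem SwitchData.v_mem_j (d : SwitchData P) : d.v ∈ P d.j := by
  rw [SwitchData.v, ← d.hv]; exact List.get_mem _ _

theorem SwitchData.i_lt_j (d : SwitchData P) : d.i < d.j := by
  have hne : d.i ≠ d.j := fun h => d.hji h.symm
  have hnlt : ¬ d.j < d.i := fun h =>
    d.min_i _ h ⟨d.i, hne, d.v, d.v_mem_j, d.v_mem_i⟩
  exact lt_of_le_of_ne (not_lt.mp hnlt) hne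

noncomputable def SwitchData.newP (d : SwitchData P) : Fin n → List V := fun t =>
  if t = d.i then glue (P d.i) (P d.j) d.k d.m
  else if t = d.j then glue (P d.j) (P d.i) d.m d.k
  else P t

theorem SwitchData.newP_i (d : SwitchData P) : d.newP d.i = glue (P d.i) (P d.j) d.k d.m := by
  simp [SwitchData.newP]

theorem SwitchData.newP_j (d : SwitchData P) : d.newP d.j = glue (P d.j) (P d.i) d.m d.k := by
  simp [SwitchData.newP, d.hji]

theorem SwitchData.newP_other (d : SwitchData P) {t : Fin n} (h1 : t ≠ d.i) (h2 : t ≠ d.j) :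
    d.newP t = P t := by
  simp [SwitchData.newP, h1, h2]

theorem SwitchData.mem_newP (d : SwitchData P) {t : Fin n} {x : V} (h : x ∈ d.newP t) :
    x ∈ P t ∨ x ∈ P d.i ∨ x ∈ P d.j := by
  by_cases h1 : t = d.i
  · subst h1; rw [d.newP_i] at h
    rcases mem_glue h with h | h
    · exact Or.inr (Or.inl h)
    · exact Or.inr (Or.inr h)
  by_cases h2 : t = d.j
  · subst h2; rw [d.newP_j] at h
    rcases mem_glue h with h | h
    · exact Or.inr (Or.inr h)
    · exact Or.inr (Or.inl h)
  · rw [d.newP_other h1 h2] at h; exact Or.inl h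


end LGVaux

namespace LGVaux

variable {V : Type*} {n : ℕ} {P : Fin n → List V}

theorem mem_glue' {l1 l2 : List V} {k m : ℕ} {x : V} :
    x ∈ glue l1 l2 k m ↔ x ∈ l1.take (k+1) ∨ x ∈ l2.drop (m+1) := List.mem_append

theorem get_not_mem_drop {l : List V} (hnd : l.Nodup) {k' k : ℕ} (hk' : k' ≤ k)
    (h : k' < l.length) : l.get ⟨k', h⟩ ∉ l.drop (k+1) := by
  intro hmem
  have hdisj : List.Disjoint (l.take (k+1)) (l.drop (k+1)) := by
    have := (List.take_append_drop (k+1) l) ▸ hnd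
    intro x hx1 hx2; exact (List.nodup_append.mp this).2.2 x hx1 x hx2 rfl
  have htk : l.get ⟨k', h⟩ ∈ l.take (k+1) := by
    have hlen : k' < (l.take (k+1)).length := by simp [List.length_take]; omega
    have : (l.take (k+1)).get ⟨k', hlen⟩ = l.get ⟨k', h⟩ := by
      simp [List.getElem_take]
    rw [← this]
    exact List.get_mem _ _
  exact hdisj htk hmem

theorem SwitchData.newP_switchData (d : SwitchData P) (hnd : ∀ t, (P t).Nodup) :
    ∃ e : SwitchData d.newP, e.i = d.i ∧ e.j = d.j ∧ e.k = d.k ∧ e.m = d.m := by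
  have hk : d.k < (d.newP d.i).length := by rw [d.newP_i]; exact glue_length d.hk
  have hm : d.m < (d.newP d.j).length := by rw [d.newP_j]; exact glue_length d.hm
  have hgi : (d.newP d.i).get ⟨d.k, hk⟩ = (P d.i).get ⟨d.k, d.hk⟩ := by
    rw [List.get_of_eq d.newP_i]; exact glue_get' d.hk le_rfl _
  have hgj : (d.newP d.j).get ⟨d.m, hm⟩ = (P d.j).get ⟨d.m, d.hm⟩ := by
    rw [List.get_of_eq d.newP_j]; exact glue_get' d.hm le_rfl _
  refine ⟨⟨d.i, d.j, d.k, d.m, hk, hm, d.hji, by rw [hgi, hgj]; exact d.hv,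
    ?_, ?_, ?_, ?_⟩, rfl, rfl, rfl, rfl⟩
  · -- min_i
    intro i' hlt hmet
    obtain ⟨j', hj', x, hx1, hx2⟩ := hmet
    have hi'1 : i' ≠ d.i := ne_of_lt hlt
    have hi'2 : i' ≠ d.j := ne_of_lt (lt_trans hlt d.i_lt_j)
    rw [d.newP_other hi'1 hi'2] at hx1
    have hnm := d.min_i i' hlt
    rcases d.mem_newP hx2 with h | h | h
    · exact hnm ⟨j', hj', x, hx1, h⟩
    · exact hnm ⟨d.i, Ne.symm hi'1, x, hx1, h⟩
    · exact hnm ⟨d.j, Ne.symm hi'2, x, hx1, h⟩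
  · -- min_k
    intro k' hlt hk' j' hj' hmem
    have hk'len : k' < (P d.i).length := lt_trans hlt d.hk
    have hgu : (d.newP d.i).get ⟨k', hk'⟩ = (P d.i).get ⟨k', hk'len⟩ := by
      rw [List.get_of_eq d.newP_i]; exact glue_get' d.hk (le_of_lt hlt) _
    rw [hgu] at hmem
    have hnot := d.min_k k' hlt hk'len
    by_cases hjj : j' = d.j
    · subst hjj
      rw [d.newP_j] at hmem
      rcases mem_glue'.mp hmem with h | h
      · exact hnot _ d.hji (List.mem_of_mem_take h)
      · exact get_not_mem_drop (hnd d.i) (le_of_lt hlt) hk'len h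
    · rw [d.newP_other hj' hjj] at hmem
      exact hnot _ hj' hmem
  · -- min_j
    intro j' hj' hmem
    rw [hgi] at hmem
    by_cases hjj : j' = d.j
    · subst hjj; exact le_rfl
    · rw [d.newP_other hj' hjj] at hmem
      exact d.min_j j' hj' hmem
  · -- min_m
    intro m' hlt hm' hEq
    have hm'len : m' < (P d.j).length := lt_trans hlt d.hm
    have hgu : (d.newP d.j).get ⟨m', hm'⟩ = (P d.j).get ⟨m', hm'len⟩ := by
      rw [List.get_of_eq d.newP_j]; exact glue_get' d.hm (le_of_lt hlt) _
    rw [hgu, hgi] at hEq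
    exact d.min_m m' hlt hm'len hEq

theorem SwitchData.newP_inv (d : SwitchData P) (e : SwitchData d.newP)
    (h1 : e.i = d.i) (h2 : e.j = d.j) (h3 : e.k = d.k) (h4 : e.m = d.m) : e.newP = P := by
  have hei := e.newP_i
  have hej := e.newP_j
  rw [h1, h2, h3, h4] at hei hej
  funext t
  by_cases ht1 : t = d.i
  · subst ht1
    rw [hei, d.newP_i, d.newP_j, glue_glue d.hk d.hm]
  by_cases ht2 : t = d.j
  · subst ht2
    rw [hej, d.newP_i, d.newP_j, glue_glue d.hm d.hk]
  · rw [e.newP_other (h1 ▸ ht1) (h2 ▸ ht2), d.newP_other ht1 ht2]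

theorem SwitchData.newP_chain' {E : V → V → Prop} (d : SwitchData P)
    (hch : ∀ t, (P t).Chain' E) : ∀ t, (d.newP t).Chain' E := by
  intro t
  by_cases ht1 : t = d.i
  · subst ht1; rw [d.newP_i]
    exact glue_chain' d.hk d.hm (hch _) (hch _) d.hv.symm
  by_cases ht2 : t = d.j
  · subst ht2; rw [d.newP_j]
    exact glue_chain' d.hm d.hk (hch _) (hch _) d.hv
  · rw [d.newP_other ht1 ht2]; exact hch t

theorem SwitchData.newP_head? (d : SwitchData P) (t : Fin n) :
    (d.newP t).head? = (P t).head? := by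
  by_cases ht1 : t = d.i
  · subst ht1; rw [d.newP_i]; exact glue_head? d.hk
  by_cases ht2 : t = d.j
  · subst ht2; rw [d.newP_j]; exact glue_head? d.hm
  · rw [d.newP_other ht1 ht2]

theorem SwitchData.newP_getLast? (d : SwitchData P) (t : Fin n) :
    (d.newP t).getLast? = (P (Equiv.swap d.i d.j t)).getLast? := by
  by_cases ht1 : t = d.i
  · subst ht1; rw [d.newP_i, Equiv.swap_apply_left]
    exact glue_getLast? d.hk d.hm d.hv.symm
  by_cases ht2 : t = d.j
  · subst ht2; rw [d.newP_j, Equiv.swap_apply_right]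
    exact glue_getLast? d.hm d.hk d.hv
  · rw [d.newP_other ht1 ht2, Equiv.swap_apply_of_ne_of_ne ht1 ht2]

theorem SwitchData.meets_newP (d : SwitchData P) : ∃ i, meets d.newP i := by
  refine ⟨d.i, d.j, d.hji, d.v, ?_, ?_⟩
  · rw [d.newP_i, SwitchData.v, ← glue_get (l2 := P d.j) (m := d.m) d.hk]
    exact List.get_mem _ _
  · rw [d.newP_j, SwitchData.v, ← d.hv, ← glue_get (l2 := P d.i) (m := d.k) d.hm]
    exact List.get_mem _ _

theorem SwitchData.newP_prod {R : Type*} [CommRing R] {w : V → V → R} (d : SwitchData P) :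
    ∏ t, pathWeight w (d.newP t) = ∏ t, pathWeight w (P t) := by
  classical
  have hjmem : d.j ∈ Finset.univ.erase d.i := Finset.mem_erase.mpr ⟨d.hji, Finset.mem_univ _⟩
  have key : ∀ (Q : Fin n → List V), ∏ t, pathWeight w (Q t)
      = pathWeight w (Q d.i) * (pathWeight w (Q d.j)
        * ∏ t ∈ (Finset.univ.erase d.i).erase d.j, pathWeight w (Q t)) := by
    intro Q
    rw [← Finset.mul_prod_erase Finset.univ _ (Finset.mem_univ d.i),
      ← Finset.mul_prod_erase _ _ hjmem]
  rw [key d.newP, key P]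
  have hrest : ∀ t ∈ (Finset.univ.erase d.i).erase d.j,
      pathWeight w (d.newP t) = pathWeight w (P t) := by
    intro t ht
    rw [Finset.mem_erase, Finset.mem_erase] at ht
    rw [d.newP_other ht.2.1 ht.1]
  rw [Finset.prod_congr rfl hrest, d.newP_i, d.newP_j, ← mul_assoc, ← mul_assoc,
    glue_weight_mul d.hk d.hm d.hv.symm]

end LGVaux

namespace LGVaux

variable {V : Type*} {n : ℕ}

theorem exists_meets_of_not_disjoint {P : Fin n → List V}
    (h : ¬ ∀ i j, i ≠ j → (P i).Disjoint (P j)) : ∃ i, meets P i := by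
  push_neg at h
  obtain ⟨i, j, hij, hd⟩ := h
  have hx : ∃ x, x ∈ P i ∧ x ∈ P j := by
    by_contra hc
    push_neg at hc
    exact hd fun x hx1 hx2 => hc x hx1 hx2
  obtain ⟨x, h1, h2⟩ := hx
  exact ⟨i, j, Ne.symm hij, x, h1, h2⟩

theorem not_disjoint_of_meets {P : Fin n → List V} (h : ∃ i, meets P i) :
    ¬ ∀ i j, i ≠ j → (P i).Disjoint (P j) := by
  rintro hall
  obtain ⟨i, j, hji, x, h1, h2⟩ := h
  exact hall i j (Ne.symm hji) h1 h2

end LGVaux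


/-- Lindström–Gessel–Viennot: Let `Γ` be a finite directed acyclic graph
(vertices `V`, edge relation `E`), `R` a commutative ring and `w` an edge-weight function.
With `e(u,v) = Σ_{P : u → v} w(P)`, for vertices `a_1,…,a_n` and `b_1,…,b_n`,
`det (e(a_i, b_j)) = Σ_{σ ∈ S_n} sgn σ · Σ_{(P_1,…,P_n)} ∏_i w(P_i)`, the inner sum over
all `n`-tuples of pairwise vertex-disjoint paths with `P_i` from `a_i` to `b_{σ i}`. -/
theorem lindstrom_gessel_viennot {V R : Type*} [Fintype V] [CommRing R]
    (E : V → V → Prop) (w : V → V → R)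
    (hacyc : ∀ l : List V, l.Chain' E → 2 ≤ l.length → l.head? ≠ l.getLast?)
    (n : ℕ) (a b : Fin n → V) :
    (Matrix.of fun i j : Fin n =>
      ∑ᶠ p : {l : List V // IsDirPath E (a i) (b j) l}, pathWeight w p.1).det
    = ∑ σ : Equiv.Perm (Fin n), (Equiv.Perm.sign σ : ℤ) •
        ∑ᶠ P : {P : Fin n → List V //
            (∀ i, IsDirPath E (a i) (b (σ i)) (P i)) ∧
            ∀ i j, i ≠ j → (P i).Disjoint (P j)},
          ∏ i : Fin n, pathWeight w (P.1 i) := by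
  classical
  have hnd : ∀ l : List V, l.Chain' E → l.Nodup := LGVaux.chain'_nodup hacyc
  have hchfin : {l : List V | l.Chain' E}.Finite :=
    (List.finite_length_le V (Fintype.card V)).subset fun l hl => (hnd l hl).length_le_card
  have hpfin : ∀ u v : V, {l : List V | IsDirPath E u v l}.Finite := fun u v =>
    hchfin.subset fun l hl => hl.1
  -- entries as finite sums
  have hentry : ∀ u v : V, (∑ᶠ p : {l : List V // IsDirPath E u v l}, pathWeight w p.1)
      = ∑ l ∈ (hpfin u v).toFinset, pathWeight w l := by
    intro u v
    haveI : Fintype {l : List V // IsDirPath E u v l} := (hpfin u v).fintype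
    rw [finsum_eq_sum_of_fintype]
    exact (Finset.sum_subtype ((hpfin u v).toFinset)
      (fun x => (hpfin u v).mem_toFinset) (fun l => pathWeight w l)).symm
  set PF : Equiv.Perm (Fin n) → Finset (Fin n → List V) :=
    fun σ => Fintype.piFinset (fun i => (hpfin (a i) (b (σ i))).toFinset) with hPF
  have hPFmem : ∀ σ (Ptup : Fin n → List V),
      Ptup ∈ PF σ ↔ ∀ i, IsDirPath E (a i) (b (σ i)) (Ptup i) := by
    intro σ Ptup
    rw [hPF, Fintype.mem_piFinset]
    exact forall_congr' fun i => (hpfin _ _).mem_toFinset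
  -- RHS inner sums as finite sums
  have hrhs : ∀ σ : Equiv.Perm (Fin n),
      (∑ᶠ P : {P : Fin n → List V //
            (∀ i, IsDirPath E (a i) (b (σ i)) (P i)) ∧
            ∀ i j, i ≠ j → (P i).Disjoint (P j)},
          ∏ i : Fin n, pathWeight w (P.1 i))
      = ∑ Ptup ∈ (PF σ).filter (fun Ptup => ∀ i j, i ≠ j → (Ptup i).Disjoint (Ptup j)),
          ∏ i, pathWeight w (Ptup i) := by
    intro σ
    have hfin2 : {P : Fin n → List V | (∀ i, IsDirPath E (a i) (b (σ i)) (P i)) ∧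
        ∀ i j, i ≠ j → (P i).Disjoint (P j)}.Finite := by
      refine Set.Finite.subset (Set.Finite.pi (fun i => hpfin (a i) (b (σ i)))) ?_
      intro Ptup h
      rw [Set.mem_univ_pi]
      exact fun i => h.1 i
    haveI : Fintype {P : Fin n → List V //
        (∀ i, IsDirPath E (a i) (b (σ i)) (P i)) ∧
        ∀ i j, i ≠ j → (P i).Disjoint (P j)} := hfin2.fintype
    rw [finsum_eq_sum_of_fintype]
    refine (Finset.sum_subtype (p := fun P : Fin n → List V =>
      (∀ i, IsDirPath E (a i) (b (σ i)) (P i)) ∧ ∀ i j, i ≠ j → (P i).Disjoint (P j))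
      _ (fun x => ?_) (fun Ptup => ∏ i, pathWeight w (Ptup i))).symm
    rw [Finset.mem_filter, hPFmem]
  -- expand determinant
  have hdet : (Matrix.of fun i j : Fin n =>
      ∑ᶠ p : {l : List V // IsDirPath E (a i) (b j) l}, pathWeight w p.1).det
      = ∑ σ : Equiv.Perm (Fin n), (Equiv.Perm.sign σ : ℤ) •
          ∏ i, ∑ l ∈ (hpfin (a i) (b (σ i))).toFinset, pathWeight w l := by
    rw [← Matrix.det_transpose, Matrix.det_apply]
    refine Finset.sum_congr rfl fun σ _ => ?_
    have hterm : ∀ i : Fin n, (Matrix.of fun i j : Fin n =>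
        ∑ᶠ p : {l : List V // IsDirPath E (a i) (b j) l}, pathWeight w p.1).transpose (σ i) i
        = ∑ l ∈ (hpfin (a i) (b (σ i))).toFinset, pathWeight w l :=
      fun i => hentry (a i) (b (σ i))
    rw [Finset.prod_congr rfl (fun i _ => hterm i)]
    rfl
  rw [hdet]
  -- expand products of sums over tuples, and split by disjointness
  have hsplit : ∀ σ : Equiv.Perm (Fin n),
      (∏ i, ∑ l ∈ (hpfin (a i) (b (σ i))).toFinset, pathWeight w l)
      = (∑ Ptup ∈ (PF σ).filter (fun Ptup => ∀ i j, i ≠ j → (Ptup i).Disjoint (Ptup j)),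
          ∏ i, pathWeight w (Ptup i))
        + ∑ Ptup ∈ (PF σ).filter (fun Ptup => ¬ ∀ i j, i ≠ j → (Ptup i).Disjoint (Ptup j)),
          ∏ i, pathWeight w (Ptup i) := by
    intro σ
    rw [Finset.prod_univ_sum, Finset.sum_filter_add_sum_filter_not]
  simp_rw [hsplit, smul_add, Finset.sum_add_distrib]
  have hbad : ∑ σ : Equiv.Perm (Fin n), (Equiv.Perm.sign σ : ℤ) •
      ∑ Ptup ∈ (PF σ).filter (fun Ptup => ¬ ∀ i j, i ≠ j → (Ptup i).Disjoint (Ptup j)),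
        ∏ i, pathWeight w (Ptup i) = 0 := by
    rw [Finset.sum_congr rfl fun σ _ => Finset.smul_sum, Finset.sum_sigma']
    set S := (Finset.univ : Finset (Equiv.Perm (Fin n))).sigma
      (fun σ => (PF σ).filter (fun Ptup => ¬ ∀ i j, i ≠ j → (Ptup i).Disjoint (Ptup j)))
      with hS
    have hSmem : ∀ x : (_ : Equiv.Perm (Fin n)) × (Fin n → List V), x ∈ S →
        (∀ t, IsDirPath E (a t) (b (x.1 t)) (x.2 t)) ∧ (∃ i, LGVaux.meets x.2 i) := by
      intro x hx
      rw [hS, Finset.mem_sigma, Finset.mem_filter] at hx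
      exact ⟨(hPFmem x.1 x.2).mp hx.2.1, LGVaux.exists_meets_of_not_disjoint hx.2.2⟩
    have hSmem' : ∀ x : (_ : Equiv.Perm (Fin n)) × (Fin n → List V),
        (∀ t, IsDirPath E (a t) (b (x.1 t)) (x.2 t)) → (∃ i, LGVaux.meets x.2 i) → x ∈ S := by
      intro x h1 h2
      rw [hS, Finset.mem_sigma, Finset.mem_filter]
      exact ⟨Finset.mem_univ _, (hPFmem x.1 x.2).mpr h1, LGVaux.not_disjoint_of_meets h2⟩
    have dd : ∀ x : (_ : Equiv.Perm (Fin n)) × (Fin n → List V), x ∈ S →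
        LGVaux.SwitchData x.2 := fun x hx => (LGVaux.exists_switchData (hSmem x hx).2).some
    have gmem : ∀ (x : (_ : Equiv.Perm (Fin n)) × (Fin n → List V)) (hx : x ∈ S),
        (⟨x.1 * Equiv.swap (dd x hx).i (dd x hx).j, (dd x hx).newP⟩ :
          (_ : Equiv.Perm (Fin n)) × (Fin n → List V)) ∈ S := by
      intro x hx
      have hch : ∀ t, (x.2 t).Chain' E := fun t => ((hSmem x hx).1 t).1
      refine hSmem' _ (fun t => ?_) ?_
      · refine ⟨(dd x hx).newP_chain' hch t, ?_, ?_⟩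
        · rw [(dd x hx).newP_head?]
          exact ((hSmem x hx).1 t).2.1
        · rw [(dd x hx).newP_getLast?]
          have := ((hSmem x hx).1 (Equiv.swap (dd x hx).i (dd x hx).j t)).2.2
          rw [this]
          rfl
      · exact (dd x hx).meets_newP
    refine Finset.sum_involution
      (fun x hx => ⟨x.1 * Equiv.swap (dd x hx).i (dd x hx).j, (dd x hx).newP⟩)
      ?_ ?_ gmem ?_
    · -- sums to zero
      intro x hx
      have hsign : ((Equiv.Perm.sign (x.1 * Equiv.swap (dd x hx).i (dd x hx).j) : ℤ))
          = -(Equiv.Perm.sign x.1 : ℤ) := by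
        rw [Equiv.Perm.sign_mul, Equiv.Perm.sign_swap (fun h => (dd x hx).hji h.symm)]
        simp
      show (Equiv.Perm.sign x.1 : ℤ) • ∏ i, pathWeight w (x.2 i)
        + (Equiv.Perm.sign (x.1 * Equiv.swap (dd x hx).i (dd x hx).j) : ℤ) •
            ∏ i, pathWeight w ((dd x hx).newP i) = 0
      rw [(dd x hx).newP_prod, hsign, neg_smul, add_neg_cancel]
    · -- g x ≠ x
      intro x hx _ hEq
      have h1 := congrArg Sigma.fst hEq
      simp only at h1
      have h2 : Equiv.swap (dd x hx).i (dd x hx).j = 1 :=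
        mul_left_cancel (a := x.1) (b := Equiv.swap (dd x hx).i (dd x hx).j) (c := 1)
          (by simpa using h1)
      have h3 := congrArg (fun e : Equiv.Perm (Fin n) => e (dd x hx).i) h2
      simp [Equiv.swap_apply_left] at h3
      exact (dd x hx).hji h3
    · -- involution
      rintro ⟨σ, Pt⟩ hx
      set d := dd ⟨σ, Pt⟩ hx with hd
      have hndP : ∀ t, (Pt t).Nodup := fun t => hnd _ (((hSmem _ hx).1 t).1)
      obtain ⟨e, he1, he2, he3, he4⟩ := d.newP_switchData hndP
      have main : ∀ (hy' : (⟨σ * Equiv.swap d.i d.j, d.newP⟩ :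
          (_ : Equiv.Perm (Fin n)) × (Fin n → List V)) ∈ S),
          (⟨(σ * Equiv.swap d.i d.j)
              * Equiv.swap (dd ⟨σ * Equiv.swap d.i d.j, d.newP⟩ hy').i
                  (dd ⟨σ * Equiv.swap d.i d.j, d.newP⟩ hy').j,
            (dd ⟨σ * Equiv.swap d.i d.j, d.newP⟩ hy').newP⟩ :
            (_ : Equiv.Perm (Fin n)) × (Fin n → List V)) = ⟨σ, Pt⟩ := by
        intro hy'
        set d2 := dd ⟨σ * Equiv.swap d.i d.j, d.newP⟩ hy' with hd2
        have hu := LGVaux.switchData_unique d2 e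
        have hP : d2.newP = Pt :=
          d.newP_inv d2 (hu.1.trans he1) (hu.2.1.trans he2) (hu.2.2.1.trans he3)
            (hu.2.2.2.trans he4)
        have hperm : (σ * Equiv.swap d.i d.j) * Equiv.swap d2.i d2.j = σ := by
          rw [hu.1.trans he1, hu.2.1.trans he2, mul_assoc, Equiv.swap_mul_self, mul_one]
        rw [hperm, hP]
      exact main _
  rw [hbad, add_zero]
  exact Finset.sum_congr rfl fun σ _ => by rw [hrhs σ]
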